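/- The scalar delay equation ẋ(t) = −a·x(t−h) with a > 0 and h ≥ 0 is exponentially stable if and only if a·h < π/2; equivalently, every root s of the characteristic equation s + a·e^{-sh} = 0 has negative real part if and only if ah < π/2. -/

import Mathlib

open Complex Real

/-- The scalar delay equation `ẋ(t) = −a x(t−h)` with `a > 0`, `h ≥ 0` is exponentially
stable iff `a h < π/2`: every root of the characteristic equation `s + a e^{-s h} = 0`
has negative real part if and only if `a h < π/2`. -/
theorem scalar_delay_stability_iff (a h : ℝ) (ha : 0 < a) (hh : 0 ≤ h) :
    (∀ s : ℂ, s + (a : ℂ) * Complex.exp (-s * h) = 0 → s.re < 0) ↔ a * h < π / 2 := by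
  constructor
  · -- contrapositive: if π/2 ≤ a h, construct a root with nonneg real part
    intro H
    by_contra hge
    push_neg at hge  -- π/2 ≤ a*h
    have hpi : (0:ℝ) < π := Real.pi_pos
    have hah : 0 < a * h := lt_of_lt_of_le (by positivity) hge
    have hhpos : 0 < h := by
      rcases hh.lt_or_eq with h' | h'
      · exact h'
      · exfalso; rw [← h'] at hah; simp at hah
    -- choose θ₁ = π - ε with ε = π / (2*(a*h+1))
    set ε : ℝ := π / (2*(a*h+1)) with hε
    have hεpos : 0 < ε := by positivity
    have hεlt : ε < π/2 := by
      rw [hε, div_lt_div_iff₀ (by positivity) (by norm_num)]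
      nlinarith
    set θ₁ : ℝ := π - ε with hθ₁
    have hθ₁gt : π/2 < θ₁ := by rw [hθ₁]; linarith
    have hθ₁lt : θ₁ < π := by rw [hθ₁]; linarith
    -- f θ = θ - a*h*exp(θ*cos θ/ sin θ)* sin θ
    set f : ℝ → ℝ := fun θ => θ - a*h*Real.exp (θ * Real.cos θ / Real.sin θ) * Real.sin θ with hf
    have hsinpos : ∀ θ ∈ Set.Icc (π/2) θ₁, 0 < Real.sin θ := by
      intro θ hθ
      exact Real.sin_pos_of_pos_of_lt_pi (lt_of_lt_of_le (by linarith) hθ.1)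
        (lt_of_le_of_lt hθ.2 hθ₁lt)
    have hcont : ContinuousOn f (Set.Icc (π/2) θ₁) := by
      apply ContinuousOn.sub continuousOn_id
      apply ContinuousOn.mul
      · apply ContinuousOn.mul continuousOn_const
        apply Real.continuous_exp.comp_continuousOn
        exact ContinuousOn.div (continuousOn_id.mul Real.continuous_cos.continuousOn)
          Real.continuous_sin.continuousOn (fun θ hθ => (hsinpos θ hθ).ne')
      · exact Real.continuous_sin.continuousOn
    have hf0 : f (π/2) ≤ 0 := by
      simp [hf, Real.cos_pi_div_two, Real.sin_pi_div_two]
      linarith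
    have hf1 : 0 < f θ₁ := by
      have hc : Real.cos θ₁ ≤ 0 :=
        Real.cos_nonpos_of_pi_div_two_le_of_le (le_of_lt hθ₁gt) (by linarith)
      have hs : 0 < Real.sin θ₁ := hsinpos θ₁ ⟨le_of_lt hθ₁gt, le_refl _⟩
      have hexp : Real.exp (θ₁ * Real.cos θ₁ / Real.sin θ₁) ≤ 1 := by
        rw [Real.exp_le_one_iff]
        apply div_nonpos_of_nonpos_of_nonneg _ hs.le
        exact mul_nonpos_of_nonneg_of_nonpos (by linarith) hc
      have hsin1 : Real.sin θ₁ ≤ ε := by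
        rw [hθ₁, Real.sin_pi_sub]
        exact Real.sin_le hεpos.le
      have key : a * h * Real.sin θ₁ < θ₁ := by
        have : a*h*Real.sin θ₁ ≤ a*h*ε := by nlinarith
        have h2 : a*h*ε < θ₁ := by
          rw [hε, hθ₁]
          rw [show a*h*(π/(2*(a*h+1))) = (a*h)*π/(2*(a*h+1)) by ring]
          rw [div_lt_iff₀ (by positivity)]
          have hεlt' : π / (2*(a*h+1)) < π/2 := hεlt
          nlinarith [hεlt']
        linarith
      have : a*h*Real.exp (θ₁ * Real.cos θ₁ / Real.sin θ₁) * Real.sin θ₁ ≤ a*h*Real.sin θ₁ :=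
        mul_le_mul_of_nonneg_right (mul_le_of_le_one_right hah.le hexp) hs.le
      simp only [hf]
      linarith
    obtain ⟨θ, hθmem, hθroot⟩ : ∃ θ ∈ Set.Icc (π/2) θ₁, f θ = 0 := by
      rcases intermediate_value_Icc (le_of_lt hθ₁gt) hcont (Set.mem_Icc.mpr ⟨hf0, hf1.le⟩) with ⟨θ, hθ, hv⟩
      exact ⟨θ, hθ, hv⟩
    have hsθ : 0 < Real.sin θ := hsinpos θ hθmem
    have hθpos : 0 < θ := lt_of_lt_of_le (by linarith) hθmem.1
    have hcθ : Real.cos θ ≤ 0 :=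
      Real.cos_nonpos_of_pi_div_two_le_of_le hθmem.1 (by linarith [hθmem.2])
    set E : ℝ := Real.exp (θ * Real.cos θ / Real.sin θ) with hE
    have hEpos : 0 < E := Real.exp_pos _
    have hkey : θ = a * h * E * Real.sin θ := by
      have := hθroot; simp only [hf] at this; linarith
    -- the root
    set σ : ℝ := -(θ * Real.cos θ / (h * Real.sin θ)) with hσ
    set ω : ℝ := θ / h with hω
    have hσnonneg : 0 ≤ σ := by
      rw [hσ]
      apply neg_nonneg.mpr
      apply div_nonpos_of_nonpos_of_nonneg
      · exact mul_nonpos_of_nonneg_of_nonpos hθpos.le hcθ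
      · positivity
    set s : ℂ := ⟨σ, ω⟩ with hs
    have hre : s.re = σ := rfl
    have him : s.im = ω := rfl
    have hexpre : (-s * (h:ℂ)).re = -σ * h := by
      simp [hs, Complex.mul_re]
    have hexpim : (-s * (h:ℂ)).im = -θ := by
      simp [hs, Complex.mul_im, hω]
      field_simp
    have hED : E = Real.exp (-σ * h) := by
      rw [hE, hσ]
      congr 1
      field_simp
    have haE : a * E = θ / (h * Real.sin θ) := by
      rw [eq_div_iff (by positivity)]
      nlinarith [hkey]
    have hED' : Real.exp (-(σ*h)) = E := by rw [hED]; ring_nf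
    have hωh : ω * h = θ := by rw [hω]; field_simp
    have hroot : s + (a : ℂ) * Complex.exp (-s * h) = 0 := by
      apply Complex.ext
      · simp only [Complex.add_re, Complex.zero_re, Complex.mul_re, Complex.ofReal_re,
          Complex.ofReal_im, Complex.exp_re, Complex.exp_im, hexpre, hexpim, hre]
        rw [show -σ * h = -(σ*h) by ring, hED', Real.cos_neg]
        have h2 : a * (E * Real.cos θ) = (θ / (h * Real.sin θ)) * Real.cos θ := by
          rw [← haE]; ring
        rw [h2, hσ]
        field_simp
        ring
      · simp only [Complex.add_im, Complex.zero_im, Complex.mul_im, Complex.ofReal_re,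
          Complex.ofReal_im, Complex.exp_re, Complex.exp_im, hexpre, hexpim, him]
        rw [show -σ * h = -(σ*h) by ring, hED', Real.sin_neg]
        have h2 : a * (E * Real.sin θ) = (θ / (h * Real.sin θ)) * Real.sin θ := by
          rw [← haE]; ring
        rw [show a * (E * -Real.sin θ) + 0 * (E * Real.cos (-θ)) = -(a * (E * Real.sin θ)) by ring,
          h2, hω]
        field_simp
        ring
    have := H s hroot
    rw [hre] at this
    linarith
  · -- easy direction
    intro hah s heq
    by_contra hσ
    push_neg at hσ  -- 0 ≤ s.re
    have hre := congrArg Complex.re heq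
    have him := congrArg Complex.im heq
    have hexpre : (-s * (h:ℂ)).re = -s.re * h := by simp [Complex.mul_re]
    have hexpim : (-s * (h:ℂ)).im = -s.im * h := by simp [Complex.mul_im]
    simp [Complex.exp_re, Complex.exp_im, hexpre, hexpim] at hre him
    -- hre : s.re + a * (exp(-s.re*h) * cos(-s.im*h)) = 0 (roughly)
    set σ := s.re
    set ω := s.im
    have hexple : Real.exp (-(σ * h)) ≤ 1 := by
      rw [Real.exp_le_one_iff]
      nlinarith
    have hωbound : |ω| ≤ a := by
      have h1 : ω = a * (Real.exp (-(σ*h)) * Real.sin (ω*h)) := by linarith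
      rw [h1, abs_mul, abs_mul, abs_of_pos ha, abs_of_pos (Real.exp_pos _)]
      calc a * (Real.exp (-(σ*h)) * |Real.sin (ω*h)|) ≤ a * (1 * 1) := by
            gcongr
            exact Real.abs_sin_le_one _
        _ = a := by ring
    have habs : |ω * h| < π / 2 := by
      rw [abs_mul, _root_.abs_of_nonneg hh]
      calc |ω| * h ≤ a * h := by gcongr
        _ < π/2 := hah
    have hcos : 0 < Real.cos (ω * h) := by
      rcases abs_lt.mp habs with ⟨h1, h2⟩
      exact Real.cos_pos_of_mem_Ioo ⟨h1, h2⟩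
    nlinarith [Real.exp_pos (-(σ*h)), hre, hcos, mul_pos (Real.exp_pos (-(σ*h))) hcos]
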